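/- arXiv:2211.10601 — 2 statements merged into one kernel-verified Lean document; each statement's English description precedes it below -/
import Mathlib

section
/- Let P₀ and P₁ be self-adjoint projections on a Hilbert space forming a Fredholm pair, i.e., the image of P₀ - P₁ in the Calkin algebra has norm strictly less than 1. Then Ind(P₀,P₁) = dim(Ran(P₀) ∩ Ker(P₁)) - dim(Ker(P₀) ∩ Ran(P₁)), where Ind(P₀,P₁) is the Fredholm index of P₁ restricted to Ran(P₀), viewed as a map Ran(P₀) → Ran(P₁). -/
open Metric Filter Module Topology
open scoped InnerProductSpace

noncomputable section AuxProj

variable {H : Type*} [NormedAddCommGroup H] [InnerProductSpace ℂ H]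

/-- A closed subspace on which a compact operator is bounded below is finite-dimensional. -/
lemma findim_of_compact_boundedBelow [CompleteSpace H] (V : Submodule ℂ H)
    (hV : IsClosed (V : Set H)) (K : H →L[ℂ] H) (hK : IsCompactOperator ⇑K)
    {ε : ℝ} (hε : 0 < ε) (hb : ∀ x ∈ V, ε * ‖x‖ ≤ ‖K x‖) :
    FiniteDimensional ℂ V := by
  haveI : CompleteSpace V := hV.completeSpace_coe
  set f : V → H := fun v => K v with hf
  have hfc : UniformContinuous f := K.uniformContinuous.comp uniformContinuous_subtype_val
  have hanti : AntilipschitzWith (⟨ε, hε.le⟩ : NNReal)⁻¹ f := by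
    rw [antilipschitzWith_iff_le_mul_dist]
    intro x y
    have h1 : ε * ‖(x : H) - y‖ ≤ ‖K ((x : H) - y)‖ := hb _ (V.sub_mem x.2 y.2)
    have hd : dist x y = ‖(x : H) - y‖ := by
      rw [Subtype.dist_eq, dist_eq_norm]
    have h2 : dist (f x) (f y) = ‖K ((x : H) - y)‖ := by
      simp [hf, dist_eq_norm, ← map_sub]
    rw [hd, h2]
    change ‖_‖ ≤ ε⁻¹ * _
    rw [← div_eq_inv_mul, le_div_iff₀ hε,
      mul_comm]
    exact h1
  have hemb := hanti.isClosedEmbedding hfc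
  obtain ⟨C, hC, hKC⟩ :=
    IsCompactOperator.image_closedBall_subset_compact (f := (K : H →ₗ[ℂ] H))
      (by exact hK) 1
  set B : Set V := closedBall (0 : V) 1 with hB
  have hBclosed : IsClosed B := isClosed_closedBall
  have hfB : f '' B ⊆ C := by
    rintro _ ⟨v, hv, rfl⟩
    apply hKC
    refine ⟨(v : H), ?_, rfl⟩
    have : ‖(v : H)‖ ≤ 1 := by
      simpa [hB, mem_closedBall, dist_zero_right] using hv
    simpa [mem_closedBall, dist_zero_right] using this
  have hcomp : IsCompact (f '' B) :=
    hC.of_isClosed_subset (hemb.isClosedMap B hBclosed) hfB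
  have hBcomp : IsCompact B := (hemb.isEmbedding.isCompact_iff).2 hcomp
  exact FiniteDimensional.of_isCompact_closedBall₀ ℂ one_pos hBcomp

/-- The image of a closed subspace under an operator bounded below on it is closed. -/
lemma isClosed_image_of_boundedBelow [CompleteSpace H] (W : Submodule ℂ H)
    (hW : IsClosed (W : Set H)) (A : H →L[ℂ] H) {c : ℝ} (hc : 0 < c)
    (hb : ∀ x ∈ W, c * ‖x‖ ≤ ‖A x‖) : IsClosed (⇑A '' (W : Set H)) := by
  haveI : CompleteSpace W := hW.completeSpace_coe
  set f : W → H := fun v => A v with hf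
  have hfc : UniformContinuous f := A.uniformContinuous.comp uniformContinuous_subtype_val
  have hanti : AntilipschitzWith (⟨c, hc.le⟩ : NNReal)⁻¹ f := by
    rw [antilipschitzWith_iff_le_mul_dist]
    intro x y
    have h1 : c * ‖(x : H) - y‖ ≤ ‖A ((x : H) - y)‖ := hb _ (W.sub_mem x.2 y.2)
    have hd : dist x y = ‖(x : H) - y‖ := by
      rw [Subtype.dist_eq, dist_eq_norm]
    have h2 : dist (f x) (f y) = ‖A ((x : H) - y)‖ := by
      simp [hf, dist_eq_norm, ← map_sub]
    rw [hd, h2]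
    change ‖_‖ ≤ c⁻¹ * _
    rw [← div_eq_inv_mul, le_div_iff₀ hc,
      mul_comm]
    exact h1
  have hcl : IsClosed (Set.range f) := hanti.isClosed_range hfc
  have : Set.range f = ⇑A '' (W : Set H) := by
    ext y
    constructor
    · rintro ⟨v, rfl⟩; exact ⟨v, v.2, rfl⟩
    · rintro ⟨x, hx, rfl⟩; exact ⟨⟨x, hx⟩, rfl⟩
  rwa [this] at hcl

/-- Pythagoras for a self-adjoint projection. -/
lemma pyth_proj [CompleteSpace H] (P₁ : H →L[ℂ] H) (h₁ : IsSelfAdjoint P₁) (hp₁ : P₁ * P₁ = P₁) (x : H) :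
    ‖x‖ ^ 2 = ‖P₁ x‖ ^ 2 + ‖x - P₁ x‖ ^ 2 := by
  have hsym := h₁.isSymmetric
  have horth : ⟪P₁ x, x - P₁ x⟫_ℂ = 0 := by
    have h2 : P₁ (x - P₁ x) = 0 := by
      have : P₁ (P₁ x) = P₁ x := by
        rw [← ContinuousLinearMap.mul_apply, hp₁]
      simp [map_sub, this]
    calc ⟪P₁ x, x - P₁ x⟫_ℂ = ⟪x, P₁ (x - P₁ x)⟫_ℂ := hsym x _
      _ = 0 := by rw [h2, inner_zero_right]
  have := norm_add_sq_eq_norm_sq_add_norm_sq_of_inner_eq_zero _ _ horth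
  simpa [pow_two] using this

end AuxProj
/-- The restriction `P₁|_{Ran(P₀)} : Ran(P₀) → Ran(P₁)`. -/
noncomputable def projRestrict {H : Type*} [NormedAddCommGroup H] [InnerProductSpace ℂ H]
    (P₀ P₁ : H →L[ℂ] H) :
    (LinearMap.range (P₀ : H →ₗ[ℂ] H)) →ₗ[ℂ] (LinearMap.range (P₁ : H →ₗ[ℂ] H)) :=
  LinearMap.restrict (P₁ : H →ₗ[ℂ] H) (fun x _ => LinearMap.mem_range_self (P₁ : H →ₗ[ℂ] H) x)

/-- The index of the pair `(P₀, P₁)`: the Fredholm index of `P₁|_{Ran(P₀)}`,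
i.e. `dim ker - dim coker` of the restricted map. -/
noncomputable def projIndex {H : Type*} [NormedAddCommGroup H] [InnerProductSpace ℂ H]
    (P₀ P₁ : H →L[ℂ] H) : ℤ :=
  (Module.finrank ℂ (LinearMap.ker (projRestrict P₀ P₁)) : ℤ) -
    (Module.finrank ℂ
      ((LinearMap.range (P₁ : H →ₗ[ℂ] H)) ⧸ LinearMap.range (projRestrict P₀ P₁)) : ℤ)

set_option maxHeartbeats 1000000 in
/-- If `(P₀, P₁)` is a Fredholm pair of self-adjoint projections (i.e. `‖P₀ - P₁‖ < 1`
modulo compact operators), then the kernel and cokernel of `P₁|_{Ran(P₀)}` are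
finite-dimensional and
`Ind(P₀, P₁) = dim(Ran(P₀) ∩ Ker(P₁)) - dim(Ker(P₀) ∩ Ran(P₁))`. -/
theorem projIndex_eq_dim_sub_dim {H : Type*} [NormedAddCommGroup H] [InnerProductSpace ℂ H]
    [CompleteSpace H] (P₀ P₁ : H →L[ℂ] H)
    (h₀ : IsSelfAdjoint P₀) (h₁ : IsSelfAdjoint P₁)
    (hp₀ : P₀ * P₀ = P₀) (hp₁ : P₁ * P₁ = P₁)
    (hFred : ∃ K : H →L[ℂ] H, IsCompactOperator ⇑K ∧ ‖P₀ - P₁ - K‖ < 1) :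
    FiniteDimensional ℂ (LinearMap.ker (projRestrict P₀ P₁)) ∧
    FiniteDimensional ℂ ((LinearMap.range (P₁ : H →ₗ[ℂ] H)) ⧸ LinearMap.range (projRestrict P₀ P₁)) ∧
    FiniteDimensional ℂ (LinearMap.range (P₀ : H →ₗ[ℂ] H) ⊓ LinearMap.ker (P₁ : H →ₗ[ℂ] H) : Submodule ℂ H) ∧
    FiniteDimensional ℂ (LinearMap.ker (P₀ : H →ₗ[ℂ] H) ⊓ LinearMap.range (P₁ : H →ₗ[ℂ] H) : Submodule ℂ H) ∧
    projIndex P₀ P₁ =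
      (Module.finrank ℂ (LinearMap.range (P₀ : H →ₗ[ℂ] H) ⊓ LinearMap.ker (P₁ : H →ₗ[ℂ] H) : Submodule ℂ H) : ℤ) -
        (Module.finrank ℂ (LinearMap.ker (P₀ : H →ₗ[ℂ] H) ⊓ LinearMap.range (P₁ : H →ₗ[ℂ] H) : Submodule ℂ H) : ℤ) := by
  obtain ⟨K, hKcomp, hKlt⟩ := hFred
  set c : ℝ := ‖P₀ - P₁ - K‖ with hcdef
  have hc0 : 0 ≤ c := norm_nonneg _
  have hc1 : c < 1 := hKlt
  have hsym₀ := h₀.isSymmetric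
  have hsym₁ := h₁.isSymmetric
  -- membership characterizations
  have hmem₀ : ∀ x : H, x ∈ LinearMap.range (P₀ : H →ₗ[ℂ] H) ↔ P₀ x = x := by
    intro x
    constructor
    · rintro ⟨y, rfl⟩
      show P₀ (P₀ y) = P₀ y
      rw [← ContinuousLinearMap.mul_apply, hp₀]
    · intro h; exact ⟨x, h⟩
  have hmem₁ : ∀ x : H, x ∈ LinearMap.range (P₁ : H →ₗ[ℂ] H) ↔ P₁ x = x := by
    intro x
    constructor
    · rintro ⟨y, rfl⟩
      show P₁ (P₁ y) = P₁ y
      rw [← ContinuousLinearMap.mul_apply, hp₁]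
    · intro h; exact ⟨x, h⟩
  have hcl₀ : IsClosed ((LinearMap.range (P₀ : H →ₗ[ℂ] H) : Submodule ℂ H) : Set H) := by
    have : ((LinearMap.range (P₀ : H →ₗ[ℂ] H) : Submodule ℂ H) : Set H) = {x | P₀ x = x} := by
      ext x; exact hmem₀ x
    rw [this]
    exact isClosed_eq P₀.continuous continuous_id
  set M : Submodule ℂ H := LinearMap.range (P₀ : H →ₗ[ℂ] H) ⊓ LinearMap.ker (P₁ : H →ₗ[ℂ] H) with hMdef
  set N : Submodule ℂ H := LinearMap.ker (P₀ : H →ₗ[ℂ] H) ⊓ LinearMap.range (P₁ : H →ₗ[ℂ] H) with hNdef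
  have hMclosed : IsClosed (M : Set H) := by
    rw [hMdef, Submodule.coe_inf]
    exact hcl₀.inter (ContinuousLinearMap.isClosed_ker P₁)
  have hNclosed : IsClosed (N : Set H) := by
    have hcl₁ : IsClosed ((LinearMap.range (P₁ : H →ₗ[ℂ] H) : Submodule ℂ H) : Set H) := by
      have : ((LinearMap.range (P₁ : H →ₗ[ℂ] H) : Submodule ℂ H) : Set H) = {x | P₁ x = x} := by
        ext x; exact hmem₁ x
      rw [this]
      exact isClosed_eq P₁.continuous continuous_id
    rw [hNdef, Submodule.coe_inf]
    exact (ContinuousLinearMap.isClosed_ker P₀).inter hcl₁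
  -- finite dimensionality of M and N
  have hMfd : FiniteDimensional ℂ M := by
    apply findim_of_compact_boundedBelow M hMclosed K hKcomp (ε := 1 - c) (by linarith)
    rintro x ⟨hx0, hx1⟩
    have hP0 : P₀ x = x := (hmem₀ x).1 hx0
    have hP1 : P₁ x = 0 := hx1
    have hval : (P₀ - P₁ - K) x = x - K x := by
      simp [ContinuousLinearMap.sub_apply, hP0, hP1]
    have hb := (P₀ - P₁ - K).le_opNorm x
    rw [hval] at hb
    have h2 : ‖x‖ - ‖K x‖ ≤ ‖x - K x‖ := norm_sub_norm_le x (K x)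
    rw [← hcdef] at hb
    linarith
  have hNfd : FiniteDimensional ℂ N := by
    apply findim_of_compact_boundedBelow N hNclosed K hKcomp (ε := 1 - c) (by linarith)
    rintro x ⟨hx0, hx1⟩
    have hP0 : P₀ x = 0 := hx0
    have hP1 : P₁ x = x := (hmem₁ x).1 hx1
    have hval : (P₀ - P₁ - K) x = -x - K x := by
      simp [ContinuousLinearMap.sub_apply, hP0, hP1]
    have hb := (P₀ - P₁ - K).le_opNorm x
    rw [hval] at hb
    have h2 : ‖x‖ ≤ ‖-x - K x‖ + ‖K x‖ := by
      have := norm_add_le (-x - K x) (K x)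
      simpa using this
    rw [← hcdef] at hb
    linarith
  -- key norm inequality on Ran P₀
  have hD : ∀ x ∈ LinearMap.range (P₀ : H →ₗ[ℂ] H), ‖x - P₁ x‖ ≤ c * ‖x‖ + ‖K x‖ := by
    intro x hx
    have hP0 : P₀ x = x := (hmem₀ x).1 hx
    have hval : x - P₁ x = (P₀ - P₁ - K) x + K x := by
      simp [ContinuousLinearMap.sub_apply, hP0]
    rw [hval]
    refine (norm_add_le _ _).trans ?_
    have := (P₀ - P₁ - K).le_opNorm x
    rw [← hcdef] at this
    linarith
  have hPyth : ∀ x : H, ‖x‖ ^ 2 = ‖P₁ x‖ ^ 2 + ‖x - P₁ x‖ ^ 2 :=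
    pyth_proj P₁ h₁ hp₁
  haveI : CompleteSpace M := hMclosed.completeSpace_coe
  have hMcompl : IsCompl M Mᗮ := Submodule.isCompl_orthogonal_of_hasOrthogonalProjection
  set W : Submodule ℂ H := Mᗮ ⊓ LinearMap.range (P₀ : H →ₗ[ℂ] H) with hWdef
  have hWclosed : IsClosed (W : Set H) := by
    rw [hWdef, Submodule.coe_inf]
    exact M.isClosed_orthogonal.inter hcl₀
  have hWle : W ≤ LinearMap.range (P₀ : H →ₗ[ℂ] H) := inf_le_right
  have hMle : M ≤ LinearMap.range (P₀ : H →ₗ[ℂ] H) := inf_le_left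
  have hrange_sub : LinearMap.range (P₀ : H →ₗ[ℂ] H) ≤ M ⊔ W := by
    intro x hx
    have hxtop : x ∈ M ⊔ Mᗮ := by
      rw [hMcompl.sup_eq_top]; trivial
    obtain ⟨m, hm, w, hw, rfl⟩ := Submodule.mem_sup.1 hxtop
    have hwW : w ∈ W := by
      refine ⟨hw, ?_⟩
      have : w = (m + w) - m := by abel
      rw [this]
      exact Submodule.sub_mem _ hx (hMle hm)
    exact Submodule.mem_sup.2 ⟨m, hm, w, hwW, rfl⟩
  -- bounded below on W
  have hbb : ∃ c' > (0 : ℝ), ∀ x ∈ W, c' * ‖x‖ ≤ ‖P₁ x‖ := by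
    by_contra hcon
    push_neg at hcon
    have hv : ∀ n : ℕ, ∃ v : H, v ∈ W ∧ ‖v‖ = 1 ∧ ‖P₁ v‖ ≤ ((n : ℝ) + 1)⁻¹ := by
      intro n
      obtain ⟨x, hxW, hxlt⟩ := hcon ((n : ℝ) + 1)⁻¹ (by positivity)
      have hx0 : x ≠ 0 := by
        rintro rfl
        simp at hxlt
      have hnx : (0:ℝ) < ‖x‖ := norm_pos_iff.2 hx0
      set v := ((‖x‖ : ℂ))⁻¹ • x with hvdef
      have hcoe : ‖((‖x‖ : ℂ))⁻¹‖ = ‖x‖⁻¹ := by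
        rw [norm_inv, Complex.norm_real, Real.norm_eq_abs, abs_of_pos hnx]
      have hnv : ‖v‖ = 1 := by
        rw [hvdef, norm_smul, hcoe, inv_mul_cancel₀ hnx.ne']
      refine ⟨v, W.smul_mem _ hxW, hnv, ?_⟩
      have hPv : ‖P₁ v‖ = ‖x‖⁻¹ * ‖P₁ x‖ := by
        rw [hvdef, map_smul, norm_smul, hcoe]
      rw [hPv]
      calc ‖x‖⁻¹ * ‖P₁ x‖ ≤ ‖x‖⁻¹ * (((n : ℝ) + 1)⁻¹ * ‖x‖) := by
            apply mul_le_mul_of_nonneg_left hxlt.le (by positivity)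
        _ = ((n : ℝ) + 1)⁻¹ := by field_simp
    choose v hvW hvnorm hvP using hv
    obtain ⟨C, hC, hKC⟩ :=
      IsCompactOperator.image_closedBall_subset_compact (f := (K : H →ₗ[ℂ] H))
        (by exact hKcomp) 1
    have hmemC : ∀ n, K (v n) ∈ C := by
      intro n
      exact hKC ⟨v n, by simp [Metric.mem_closedBall, dist_zero_right, hvnorm n], rfl⟩
    obtain ⟨z, hzC, φs, hφmono, hφtend⟩ := hC.tendsto_subseq hmemC
    set w : ℕ → H := fun n => v (φs n) with hwdef
    have hwW : ∀ n, w n ∈ W := fun n => hvW _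
    have hwnorm : ∀ n, ‖w n‖ = 1 := fun n => hvnorm _
    have hwP : ∀ n, ‖P₁ (w n)‖ ≤ ((n : ℝ) + 1)⁻¹ := by
      intro n
      refine (hvP (φs n)).trans ?_
      have hn : (n : ℝ) ≤ (φs n : ℝ) := by exact_mod_cast hφmono.le_apply
      gcongr
    have hKcauchy : Tendsto (fun p : ℕ × ℕ => dist (K (w p.1)) (K (w p.2))) atTop (𝓝 0) := by
      have hcs : CauchySeq fun n => K (w n) := hφtend.cauchySeq
      rwa [cauchySeq_iff_tendsto_dist_atTop_0] at hcs
    have h1c2 : (0:ℝ) < 1 - c ^ 2 := by nlinarith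
    set g : ℕ × ℕ → ℝ := fun p => ((p.1 : ℝ) + 1)⁻¹ + ((p.2 : ℝ) + 1)⁻¹ with hgdef
    set k : ℕ × ℕ → ℝ := fun p => dist (K (w p.1)) (K (w p.2)) with hkdef
    have hknonneg : ∀ p : ℕ × ℕ, 0 ≤ k p := fun p => dist_nonneg
    have hbound : ∀ p : ℕ × ℕ, dist (w p.1) (w p.2) ≤
        Real.sqrt ((1 - c ^ 2)⁻¹ * (g p ^ 2 + 4 * c * k p + k p ^ 2)) := by
      intro p
      set u : H := w p.1 - w p.2 with hudef
      have huW : u ∈ W := W.sub_mem (hwW _) (hwW _)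
      have huR : u ∈ LinearMap.range (P₀ : H →ₗ[ℂ] H) := hWle huW
      have hP : ‖u‖ ^ 2 = ‖P₁ u‖ ^ 2 + ‖u - P₁ u‖ ^ 2 := hPyth u
      have hA : ‖P₁ u‖ ≤ g p := by
        rw [hudef, map_sub]
        refine (norm_sub_le _ _).trans ?_
        exact add_le_add (hwP _) (hwP _)
      have hB : ‖u - P₁ u‖ ≤ c * ‖u‖ + ‖K u‖ := hD u huR
      have hu2 : ‖u‖ ≤ 2 := by
        rw [hudef]
        refine (norm_sub_le _ _).trans ?_
        rw [hwnorm, hwnorm]; norm_num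
      have hKu : ‖K u‖ = k p := by
        rw [hudef, map_sub, hkdef]
        exact (dist_eq_norm _ _).symm
      have hB' : ‖u - P₁ u‖ ≤ c * ‖u‖ + k p := by rw [← hKu]; exact hB
      have hsq1 : ‖P₁ u‖ ^ 2 ≤ g p ^ 2 := pow_le_pow_left₀ (norm_nonneg (P₁ u)) hA 2
      have hsq2 : ‖u - P₁ u‖ ^ 2 ≤ (c * ‖u‖ + k p) ^ 2 :=
        pow_le_pow_left₀ (norm_nonneg _) hB' 2
      have hck : 0 ≤ c * k p * (2 - ‖u‖) :=
        mul_nonneg (mul_nonneg hc0 (hknonneg p)) (by linarith)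
      have key : (1 - c ^ 2) * ‖u‖ ^ 2 ≤ g p ^ 2 + 4 * c * k p + k p ^ 2 := by
        nlinarith [hP, hsq1, hsq2, hck]
      have h2 : ‖u‖ ^ 2 ≤ (1 - c ^ 2)⁻¹ * (g p ^ 2 + 4 * c * k p + k p ^ 2) := by
        rw [le_inv_mul_iff₀ h1c2]
        exact key
      have h3 := Real.sqrt_le_sqrt h2
      rw [Real.sqrt_sq (norm_nonneg u)] at h3
      rw [dist_eq_norm]
      exact h3
    have hfst : Tendsto (fun p : ℕ × ℕ => p.1) atTop atTop := by
      rw [← Filter.prod_atTop_atTop_eq]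
      exact tendsto_fst
    have hsnd : Tendsto (fun p : ℕ × ℕ => p.2) atTop atTop := by
      rw [← Filter.prod_atTop_atTop_eq]
      exact tendsto_snd
    have h1 : Tendsto (fun n : ℕ => ((n : ℝ) + 1)⁻¹) atTop (𝓝 0) := by
      simpa only [one_div] using (tendsto_one_div_add_atTop_nhds_zero_nat : Tendsto (fun n : ℕ => 1 / ((n : ℝ) + 1)) atTop (𝓝 0))
    have hgtend : Tendsto g atTop (𝓝 0) := by
      have := (h1.comp hfst).add (h1.comp hsnd)
      simpa [hgdef, Function.comp] using this
    have hsqrt_tend : Tendsto (fun p : ℕ × ℕ =>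
        Real.sqrt ((1 - c ^ 2)⁻¹ * (g p ^ 2 + 4 * c * k p + k p ^ 2))) atTop (𝓝 0) := by
      have h2 : Tendsto (fun p : ℕ × ℕ => g p ^ 2 + 4 * c * k p + k p ^ 2) atTop (𝓝 0) := by
        have := ((hgtend.pow 2).add (hKcauchy.const_mul (4 * c))).add (hKcauchy.pow 2)
        simpa using this
      have h3 := h2.const_mul ((1 - c ^ 2)⁻¹)
      rw [mul_zero] at h3
      have h4 := h3.sqrt
      simpa [Real.sqrt_zero] using h4
    have hwC : CauchySeq w := by
      rw [cauchySeq_iff_tendsto_dist_atTop_0]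
      exact squeeze_zero (fun p => dist_nonneg) hbound hsqrt_tend
    obtain ⟨x, hx⟩ := cauchySeq_tendsto_of_complete hwC
    have hxW : x ∈ W := hWclosed.mem_of_tendsto hx (Eventually.of_forall hwW)
    have hxnorm : ‖x‖ = 1 := by
      have ha : Tendsto (fun n => ‖w n‖) atTop (𝓝 ‖x‖) := (continuous_norm.tendsto x).comp hx
      have hb : Tendsto (fun _ : ℕ => (1:ℝ)) atTop (𝓝 1) := tendsto_const_nhds
      have : (fun n => ‖w n‖) = fun _ : ℕ => (1:ℝ) := funext fun n => hwnorm n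
      rw [this] at ha
      exact tendsto_nhds_unique ha hb
    have hP1x : P₁ x = 0 := by
      have ha : Tendsto (fun n => P₁ (w n)) atTop (𝓝 (P₁ x)) := (P₁.continuous.tendsto x).comp hx
      have hb : Tendsto (fun n => P₁ (w n)) atTop (𝓝 0) := squeeze_zero_norm hwP h1
      exact tendsto_nhds_unique ha hb
    have hxM : x ∈ M := ⟨hWle hxW, hP1x⟩
    have hxO : x ∈ Mᗮ := hxW.1
    have hx0 : x = 0 := by
      have := (Submodule.mem_orthogonal M x).1 hxO x hxM
      rwa [inner_self_eq_zero] at this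
    rw [hx0, norm_zero] at hxnorm
    norm_num at hxnorm
  -- closed range
  set Rn : Submodule ℂ H := Submodule.map (P₁ : H →ₗ[ℂ] H) (LinearMap.range (P₀ : H →ₗ[ℂ] H)) with hRdef
  have hRange_eq : LinearMap.range (P₀ : H →ₗ[ℂ] H) = M ⊔ W := by
    refine le_antisymm hrange_sub (sup_le hMle hWle)
  have hRn_eq_set : (Rn : Set H) = ⇑P₁ '' (W : Set H) := by
    have hmapM : Submodule.map (P₁ : H →ₗ[ℂ] H) M = ⊥ := by
      rw [Submodule.eq_bot_iff]
      rintro _ ⟨y, ⟨hy1, hy2⟩, rfl⟩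
      exact hy2
    have hRW : Rn = Submodule.map (P₁ : H →ₗ[ℂ] H) W := by
      rw [hRdef, hRange_eq, Submodule.map_sup, hmapM, bot_sup_eq]
    rw [hRW]
    rfl
  obtain ⟨c', hc'pos, hc'⟩ := hbb
  have hRnclosed : IsClosed (Rn : Set H) := by
    rw [hRn_eq_set]
    exact isClosed_image_of_boundedBelow W hWclosed P₁ hc'pos hc'
  haveI : CompleteSpace Rn := hRnclosed.completeSpace_coe
  have hRncompl : IsCompl Rn Rnᗮ := Submodule.isCompl_orthogonal_of_hasOrthogonalProjection
  have hRn_le : Rn ≤ LinearMap.range (P₁ : H →ₗ[ℂ] H) := by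
    rintro _ ⟨y, hy, rfl⟩
    exact LinearMap.mem_range_self _ y
  have hNorth : Rnᗮ ⊓ LinearMap.range (P₁ : H →ₗ[ℂ] H) ≤ N := by
    rintro y ⟨hy1, hy2⟩
    have hP1y : P₁ y = y := (hmem₁ y).1 hy2
    have key : ∀ a : H, ⟪a, P₀ y⟫_ℂ = 0 := by
      intro a
      have hmem : P₁ (P₀ a) ∈ Rn := ⟨P₀ a, LinearMap.mem_range_self _ a, rfl⟩
      have h0 : ⟪P₁ (P₀ a), y⟫_ℂ = 0 := (Submodule.mem_orthogonal Rn y).1 hy1 _ hmem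
      calc ⟪a, P₀ y⟫_ℂ = ⟪P₀ a, y⟫_ℂ := (hsym₀ a y).symm
        _ = ⟪P₀ a, P₁ y⟫_ℂ := by rw [hP1y]
        _ = ⟪P₁ (P₀ a), y⟫_ℂ := (hsym₁ (P₀ a) y).symm
        _ = 0 := h0
    have hP0y : P₀ y = 0 := by
      have := key (P₀ y)
      rwa [inner_self_eq_zero] at this
    exact ⟨hP0y, hy2⟩
  set S : Submodule ℂ H := LinearMap.range (P₀ : H →ₗ[ℂ] H) ⊔ LinearMap.ker (P₁ : H →ₗ[ℂ] H) with hSdef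
  have hkerle : LinearMap.ker (P₁ : H →ₗ[ℂ] H) ≤ S := le_sup_right
  have hSN : IsCompl S N := by
    constructor
    · rw [Submodule.disjoint_def]
      intro x hxS hxN
      obtain ⟨hxk, hxr⟩ := hxN
      have hP0x : P₀ x = 0 := hxk
      have hP1x : P₁ x = x := (hmem₁ x).1 hxr
      obtain ⟨a, ha, b, hb, rfl⟩ := Submodule.mem_sup.1 hxS
      have hP0a : P₀ a = a := (hmem₀ a).1 ha
      have hP1b : P₁ b = 0 := hb
      have hxa : ⟪a + b, a⟫_ℂ = 0 := by
        calc ⟪a + b, a⟫_ℂ = ⟪a + b, P₀ a⟫_ℂ := by rw [hP0a]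
          _ = ⟪P₀ (a + b), a⟫_ℂ := (hsym₀ (a + b) a).symm
          _ = 0 := by rw [hP0x, inner_zero_left]
      have hxb : ⟪a + b, b⟫_ℂ = 0 := by
        calc ⟪a + b, b⟫_ℂ = ⟪P₁ (a + b), b⟫_ℂ := by rw [hP1x]
          _ = ⟪a + b, P₁ b⟫_ℂ := hsym₁ (a + b) b
          _ = 0 := by rw [hP1b, inner_zero_right]
      have : ⟪a + b, a + b⟫_ℂ = 0 := by
        rw [inner_add_right, hxa, hxb, add_zero]
      rwa [inner_self_eq_zero] at this
    · rw [codisjoint_iff, eq_top_iff]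
      intro x _
      have hrle : LinearMap.range (P₁ : H →ₗ[ℂ] H) ≤ S ⊔ N := by
        intro y hy
        have hytop : y ∈ Rn ⊔ Rnᗮ := by
          rw [hRncompl.sup_eq_top]; trivial
        obtain ⟨r, hr, t, ht, rfl⟩ := Submodule.mem_sup.1 hytop
        have htN : t ∈ N := hNorth ⟨ht, by
          have : t = (r + t) - r := by abel
          rw [this]
          exact Submodule.sub_mem _ hy (hRn_le hr)⟩
        have hrS : r ∈ S := by
          obtain ⟨a, ha, rfl⟩ := hr
          have h2 : a - P₁ a ∈ LinearMap.ker (P₁ : H →ₗ[ℂ] H) := by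
            have : P₁ (P₁ a) = P₁ a := by
              rw [← ContinuousLinearMap.mul_apply, hp₁]
            simp [map_sub, this]
          have : P₁ a = a - (a - P₁ a) := by abel
          show P₁ a ∈ S
          rw [this]
          exact Submodule.sub_mem _ (Submodule.mem_sup_left ha) (hkerle h2)
        exact Submodule.mem_sup.2 ⟨r, hrS, t, htN, rfl⟩
      have hx1 : P₁ x ∈ S ⊔ N := hrle (LinearMap.mem_range_self _ x)
      have hx2 : x - P₁ x ∈ S ⊔ N := by
        apply Submodule.mem_sup_left
        apply hkerle
        have : P₁ (P₁ x) = P₁ x := by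
          rw [← ContinuousLinearMap.mul_apply, hp₁]
        simp [map_sub, this]
      have : x = P₁ x + (x - P₁ x) := by abel
      rw [this]
      exact Submodule.add_mem _ hx1 hx2
  -- the kernel equivalence
  set T := projRestrict P₀ P₁ with hTdef
  have hTapply : ∀ z : LinearMap.range (P₀ : H →ₗ[ℂ] H), ((T z : LinearMap.range (P₁ : H →ₗ[ℂ] H)) : H) = P₁ (z : H) :=
    fun z => rfl
  have hkerT : ∀ z : (LinearMap.range (P₀ : H →ₗ[ℂ] H) : Submodule ℂ H),
      (z ∈ LinearMap.ker T ↔ (z : H) ∈ M) := by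
    intro z
    constructor
    · intro hz
      refine ⟨z.2, ?_⟩
      have h0 : T z = 0 := hz
      have := congrArg (Subtype.val) h0
      rw [hTapply z] at this
      exact this
    · rintro ⟨h1, h2⟩
      have : T z = 0 := Subtype.ext (by rw [hTapply z]; exact h2)
      exact this
  let e₁fun : (LinearMap.ker T : Submodule ℂ (LinearMap.range (P₀ : H →ₗ[ℂ] H))) →ₗ[ℂ] M :=
    { toFun := fun z => ⟨((z : LinearMap.range (P₀ : H →ₗ[ℂ] H)) : H), (hkerT z.1).1 z.2⟩
      map_add' := fun a b => rfl
      map_smul' := fun a b => rfl }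
  have he₁bij : Function.Bijective e₁fun := by
    constructor
    · intro a b hab
      have h := Subtype.ext_iff.mp hab
      exact Subtype.ext (Subtype.ext h)
    · rintro ⟨m, hm⟩
      exact ⟨⟨⟨m, hm.1⟩, (hkerT ⟨m, hm.1⟩).2 hm⟩, rfl⟩
  let e₁ : (LinearMap.ker T : Submodule ℂ (LinearMap.range (P₀ : H →ₗ[ℂ] H))) ≃ₗ[ℂ] M :=
    LinearEquiv.ofBijective e₁fun he₁bij
  -- the cokernel equivalence
  let φ : (LinearMap.range (P₁ : H →ₗ[ℂ] H) : Submodule ℂ H) →ₗ[ℂ] (H ⧸ S) :=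
    S.mkQ.comp (LinearMap.range (P₁ : H →ₗ[ℂ] H)).subtype
  have hrangeT : LinearMap.range T = LinearMap.ker φ := by
    ext y
    constructor
    · rintro ⟨z, rfl⟩
      have : ((T z : LinearMap.range (P₁ : H →ₗ[ℂ] H)) : H) ∈ S := by
        rw [hTapply z]
        have h2 : (z : H) - P₁ (z : H) ∈ LinearMap.ker (P₁ : H →ₗ[ℂ] H) := by
          have : P₁ (P₁ (z : H)) = P₁ (z : H) := by
            rw [← ContinuousLinearMap.mul_apply, hp₁]
          simp [map_sub, this]
        have : P₁ (z : H) = (z : H) - ((z : H) - P₁ (z : H)) := by abel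
        rw [this]
        exact Submodule.sub_mem _ (Submodule.mem_sup_left z.2) (hkerle h2)
      simpa [φ, LinearMap.mem_ker, Submodule.mkQ_apply, Submodule.Quotient.mk_eq_zero] using this
    · intro hy
      have hyS : (y : H) ∈ S := by
        simpa [φ, LinearMap.mem_ker, Submodule.mkQ_apply, Submodule.Quotient.mk_eq_zero] using hy
      obtain ⟨a, ha, b, hb, hab⟩ := Submodule.mem_sup.1 hyS
      have hP1y : P₁ (y : H) = (y : H) := (hmem₁ _).1 y.2
      refine ⟨⟨a, ha⟩, ?_⟩
      apply Subtype.ext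
      rw [hTapply]
      show P₁ a = (y : H)
      have hP1b : P₁ b = 0 := hb
      have : P₁ a = P₁ ((y : H)) - P₁ b := by
        rw [← map_sub]
        congr 1
        rw [← hab]; abel
      rw [this, hP1b, sub_zero, hP1y]
  have hφsurj : Function.Surjective φ := by
    intro q
    obtain ⟨h, rfl⟩ := S.mkQ_surjective q
    refine ⟨⟨P₁ h, LinearMap.mem_range_self _ h⟩, ?_⟩
    show S.mkQ (P₁ h) = S.mkQ h
    rw [Submodule.mkQ_apply, Submodule.mkQ_apply, Submodule.Quotient.eq]
    have h2 : P₁ h - h ∈ LinearMap.ker (P₁ : H →ₗ[ℂ] H) := by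
      have : P₁ (P₁ h) = P₁ h := by
        rw [← ContinuousLinearMap.mul_apply, hp₁]
      simp [map_sub, this]
    exact hkerle h2
  let e₂ : ((LinearMap.range (P₁ : H →ₗ[ℂ] H) : Submodule ℂ H) ⧸ LinearMap.range T) ≃ₗ[ℂ] N :=
    ((Submodule.quotEquivOfEq _ _ hrangeT).trans
      (φ.quotKerEquivOfSurjective hφsurj)).trans (S.quotientEquivOfIsCompl N hSN)
  refine ⟨?_, ?_, hMfd, hNfd, ?_⟩
  · exact e₁.symm.finiteDimensional
  · exact e₂.symm.finiteDimensional
  · rw [projIndex, ← hTdef, e₁.finrank_eq, e₂.finrank_eq]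
end

section
/- Let P₀, P₁ be self-adjoint projections on a finite-dimensional Hilbert space. Then Tr(P₀ - P₁) = dim(Ran(P₀) ∩ Ker(P₁)) - dim(Ker(P₀) ∩ Ran(P₁)). -/
open LinearMap Module ContinuousLinearMap

section Aux

variable {H : Type*} [NormedAddCommGroup H] [InnerProductSpace ℂ H]
    [CompleteSpace H] [FiniteDimensional ℂ H]

/-- Kernel of the adjoint is the orthogonal complement of the range. -/
lemma ker_adjoint_eq_orthogonal_range' (T : H →L[ℂ] H) :
    LinearMap.ker ((ContinuousLinearMap.adjoint T : H →L[ℂ] H) : H →ₗ[ℂ] H) = (LinearMap.range (T : H →ₗ[ℂ] H))ᗮ := by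
  ext x
  simp only [LinearMap.mem_ker, Submodule.mem_orthogonal, ContinuousLinearMap.coe_coe]
  constructor
  · rintro hx u ⟨y, rfl⟩
    rw [ContinuousLinearMap.coe_coe, ← ContinuousLinearMap.adjoint_inner_right]
    simp [hx]
  · intro hx
    rw [← inner_self_eq_zero (𝕜 := ℂ)]
    rw [ContinuousLinearMap.adjoint_inner_right]
    exact hx _ ⟨_, rfl⟩

/-- For a self-adjoint operator, the kernel is the orthogonal complement of the range. -/
lemma ker_eq_orthogonal_range' {T : H →L[ℂ] H} (hT : IsSelfAdjoint T) :
    LinearMap.ker (T : H →ₗ[ℂ] H) = (LinearMap.range (T : H →ₗ[ℂ] H))ᗮ := by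
  conv_lhs => rw [← hT.adjoint_eq]
  exact ker_adjoint_eq_orthogonal_range' T

/-- Rank of the adjoint equals the rank. -/
lemma finrank_range_adjoint' (T : H →L[ℂ] H) :
    finrank ℂ (LinearMap.range ((ContinuousLinearMap.adjoint T : H →L[ℂ] H) : H →ₗ[ℂ] H)) =
      finrank ℂ (LinearMap.range (T : H →ₗ[ℂ] H)) := by
  have h1 : finrank ℂ (LinearMap.range ((ContinuousLinearMap.adjoint T : H →L[ℂ] H) : H →ₗ[ℂ] H))
      + finrank ℂ (LinearMap.ker ((ContinuousLinearMap.adjoint T : H →L[ℂ] H) : H →ₗ[ℂ] H)) = finrank ℂ H :=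
    LinearMap.finrank_range_add_finrank_ker
      (((ContinuousLinearMap.adjoint T) : H →ₗ[ℂ] H))
  have h2 := Submodule.finrank_add_finrank_orthogonal (K := LinearMap.range (T : H →ₗ[ℂ] H))
  rw [ker_adjoint_eq_orthogonal_range' T] at h1
  omega

/-- Rank–nullity for the restriction of `P` to a submodule `U`. -/
lemma finrank_restrict (P : H →L[ℂ] H) (U : Submodule ℂ H) :
    finrank ℂ U = finrank ℂ (U ⊓ LinearMap.ker (P : H →ₗ[ℂ] H) : Submodule ℂ H)
      + finrank ℂ (U.map (P : H →ₗ[ℂ] H)) := by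
  have h := LinearMap.finrank_range_add_finrank_ker ((P : H →ₗ[ℂ] H).comp U.subtype)
  have hker : LinearMap.ker ((P : H →ₗ[ℂ] H).comp U.subtype)
      = Submodule.comap U.subtype (U ⊓ LinearMap.ker (P : H →ₗ[ℂ] H)) := by
    rw [LinearMap.ker_comp]
    ext x
    simp [LinearMap.mem_ker, x.2]
  have hkerrank : finrank ℂ (LinearMap.ker ((P : H →ₗ[ℂ] H).comp U.subtype))
      = finrank ℂ (U ⊓ LinearMap.ker (P : H →ₗ[ℂ] H) : Submodule ℂ H) := by
    rw [hker]
    exact (Submodule.comapSubtypeEquivOfLe (inf_le_left)).finrank_eq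
  have hrange : LinearMap.range ((P : H →ₗ[ℂ] H).comp U.subtype)
      = U.map (P : H →ₗ[ℂ] H) := by
    rw [LinearMap.range_comp, Submodule.range_subtype]
  rw [hrange, hkerrank] at h
  omega

end Aux

/-- For self-adjoint projections `P₀, P₁` on a finite-dimensional Hilbert space,
`Tr(P₀ - P₁) = dim(Ran(P₀) ∩ Ker(P₁)) - dim(Ker(P₀) ∩ Ran(P₁))`. -/
theorem trace_diff_projections {H : Type*} [NormedAddCommGroup H] [InnerProductSpace ℂ H]
    [CompleteSpace H] [FiniteDimensional ℂ H]
    (P₀ P₁ : H →L[ℂ] H) (h₀ : IsSelfAdjoint P₀) (h₁ : IsSelfAdjoint P₁)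
    (hp₀ : P₀ * P₀ = P₀) (hp₁ : P₁ * P₁ = P₁) :
    LinearMap.trace ℂ H ((P₀ : H →ₗ[ℂ] H) - (P₁ : H →ₗ[ℂ] H)) =
      (Module.finrank ℂ (LinearMap.range (P₀ : H →ₗ[ℂ] H) ⊓ LinearMap.ker (P₁ : H →ₗ[ℂ] H) : Submodule ℂ H) : ℂ) -
        (Module.finrank ℂ (LinearMap.ker (P₀ : H →ₗ[ℂ] H) ⊓ LinearMap.range (P₁ : H →ₗ[ℂ] H) : Submodule ℂ H) : ℂ) := by
  -- traces of the projections are the ranks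
  have hproj₀ : LinearMap.IsProj (LinearMap.range (P₀ : H →ₗ[ℂ] H)) (P₀ : H →ₗ[ℂ] H) := by
    refine ⟨fun x => ⟨x, rfl⟩, ?_⟩
    rintro x ⟨y, rfl⟩
    have := congrArg (fun T => T y) hp₀
    simpa using this
  have hproj₁ : LinearMap.IsProj (LinearMap.range (P₁ : H →ₗ[ℂ] H)) (P₁ : H →ₗ[ℂ] H) := by
    refine ⟨fun x => ⟨x, rfl⟩, ?_⟩
    rintro x ⟨y, rfl⟩
    have := congrArg (fun T => T y) hp₁
    simpa using this
  have ht₀ : LinearMap.trace ℂ H (P₀ : H →ₗ[ℂ] H)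
      = (finrank ℂ (LinearMap.range (P₀ : H →ₗ[ℂ] H)) : ℂ) := hproj₀.trace
  have ht₁ : LinearMap.trace ℂ H (P₁ : H →ₗ[ℂ] H)
      = (finrank ℂ (LinearMap.range (P₁ : H →ₗ[ℂ] H)) : ℂ) := hproj₁.trace
  -- rank-nullity of each projection restricted to the range of the other
  have hr₀ := finrank_restrict P₁ (LinearMap.range (P₀ : H →ₗ[ℂ] H))
  have hr₁ := finrank_restrict P₀ (LinearMap.range (P₁ : H →ₗ[ℂ] H))
  -- the two "cross" ranks agree
  have hmap₀ : (LinearMap.range (P₀ : H →ₗ[ℂ] H)).map (P₁ : H →ₗ[ℂ] H)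
      = LinearMap.range ((P₁ ∘L P₀ : H →L[ℂ] H) : H →ₗ[ℂ] H) := by
    rw [show LinearMap.range ((P₁ ∘L P₀ : H →L[ℂ] H) : H →ₗ[ℂ] H)
        = LinearMap.range ((P₁ : H →ₗ[ℂ] H) ∘ₗ (P₀ : H →ₗ[ℂ] H)) from rfl,
      LinearMap.range_comp]
  have hmap₁ : (LinearMap.range (P₁ : H →ₗ[ℂ] H)).map (P₀ : H →ₗ[ℂ] H)
      = LinearMap.range ((P₀ ∘L P₁ : H →L[ℂ] H) : H →ₗ[ℂ] H) := by
    rw [show LinearMap.range ((P₀ ∘L P₁ : H →L[ℂ] H) : H →ₗ[ℂ] H)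
        = LinearMap.range ((P₀ : H →ₗ[ℂ] H) ∘ₗ (P₁ : H →ₗ[ℂ] H)) from rfl,
      LinearMap.range_comp]
  have hcross : finrank ℂ ((LinearMap.range (P₀ : H →ₗ[ℂ] H)).map (P₁ : H →ₗ[ℂ] H))
      = finrank ℂ ((LinearMap.range (P₁ : H →ₗ[ℂ] H)).map (P₀ : H →ₗ[ℂ] H)) := by
    rw [hmap₀, hmap₁, ← finrank_range_adjoint' (P₁ ∘L P₀),
      ContinuousLinearMap.adjoint_comp, h₀.adjoint_eq, h₁.adjoint_eq]
  -- kernels are orthogonal complements (used only to match inf order)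
  rw [map_sub, ht₀, ht₁, hr₀, hr₁, hcross,
    show LinearMap.ker (P₀ : H →ₗ[ℂ] H) ⊓ LinearMap.range (P₁ : H →ₗ[ℂ] H) = LinearMap.range (P₁ : H →ₗ[ℂ] H) ⊓ LinearMap.ker (P₀ : H →ₗ[ℂ] H)
      from inf_comm _ _]
  push_cast
  ring
end
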